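/- Let H = (V,E) be a k-uniform hypergraph and W ⊆ V. For a vertex v ∈ W, consider the function Y(W) = ∑_{u∈V} deg_W(u)², where deg_W(u) is the degree of u in the subhypergraph induced by W. Then changing whether v belongs to W changes Y by at most deg_{W∪{v}}(v)² + 4 ∑_u codeg_{W∪{v}}(u,v) · deg_{W∪{v}}(u), where the sum ranges over vertices u ≠ v lying in a common edge with v, and codeg denotes co-degree. -/

import Mathlib

lemma sum_sq_lipschitz_aux {V : Type*} [Fintype V] [DecidableEq V] (v : V)
    (A B C : V → ℤ) (hnB : ∀ u, 0 ≤ B u) (hnC : ∀ u, 0 ≤ C u)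
    (hs : ∀ u, A u = B u + C u) (hBv : B v = 0) :
    |(∑ u : V, A u ^ 2) - ∑ u : V, B u ^ 2|
      ≤ A v ^ 2 + 4 * ∑ u ∈ Finset.univ.erase v, C u * A u := by
  have hnA : ∀ u, 0 ≤ A u := fun u => (hs u) ▸ add_nonneg (hnB u) (hnC u)
  have hterm : ∀ u, B u ^ 2 ≤ A u ^ 2 := by
    intro u; nlinarith [hs u, hnB u, hnC u]
  rw [abs_of_nonneg (sub_nonneg.2 (Finset.sum_le_sum fun u _ => hterm u)),
    ← Finset.sum_sub_distrib, ← Finset.add_sum_erase _ _ (Finset.mem_univ v),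
    hBv, Finset.mul_sum]
  apply add_le_add
  · simp
  · apply Finset.sum_le_sum
    intro u _
    nlinarith [hs u, hnA u, hnB u, hnC u]

/-- Lipschitz bound for `Y(W) = ∑_u deg_W(u)²`: toggling the membership of a
vertex `v` changes `Y` by at most
`deg_{W∪{v}}(v)² + 4 ∑_{u ≠ v} codeg_{W∪{v}}(u,v) · deg_{W∪{v}}(u)`. -/
theorem sum_sq_degrees_lipschitz {V : Type*} [Fintype V] [DecidableEq V]
    (k : ℕ) (E : Finset (Finset V)) (hE : ∀ e ∈ E, e.card = k)
    (W : Finset V) (v : V) (hv : v ∈ W) :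
    |(∑ u : V, ((E.filter (fun e => u ∈ e ∧ e ⊆ insert v W)).card : ℤ) ^ 2)
      - ∑ u : V, ((E.filter (fun e => u ∈ e ∧ e ⊆ W.erase v)).card : ℤ) ^ 2|
      ≤ ((E.filter (fun e => v ∈ e ∧ e ⊆ insert v W)).card : ℤ) ^ 2
        + 4 * ∑ u ∈ Finset.univ.erase v,
            ((E.filter (fun e => u ∈ e ∧ v ∈ e ∧ e ⊆ insert v W)).card : ℤ)
              * (E.filter (fun e => u ∈ e ∧ e ⊆ insert v W)).card := by
  have hins : insert v W = W := Finset.insert_eq_self.2 hv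
  have hsplit : ∀ u : V,
      ((E.filter (fun e => u ∈ e ∧ e ⊆ insert v W)).card : ℤ)
        = ((E.filter (fun e => u ∈ e ∧ e ⊆ W.erase v)).card : ℤ)
          + ((E.filter (fun e => u ∈ e ∧ v ∈ e ∧ e ⊆ insert v W)).card : ℤ) := by
    intro u
    rw [← Nat.cast_add]
    congr 1
    have h1 : E.filter (fun e => u ∈ e ∧ e ⊆ W.erase v)
        = (E.filter (fun e => u ∈ e ∧ e ⊆ insert v W)).filter (fun e => v ∉ e) := by
      rw [Finset.filter_filter]
      apply Finset.filter_congr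
      intro e _
      simp only [hins, Finset.subset_erase]
      tauto
    have h2 : E.filter (fun e => u ∈ e ∧ v ∈ e ∧ e ⊆ insert v W)
        = (E.filter (fun e => u ∈ e ∧ e ⊆ insert v W)).filter (fun e => v ∈ e) := by
      rw [Finset.filter_filter]
      apply Finset.filter_congr
      intro e _
      tauto
    rw [h1, h2, add_comm, Finset.card_filter_add_card_filter_not]
  have hBv : ((E.filter (fun e => v ∈ e ∧ e ⊆ W.erase v)).card : ℤ) = 0 := by
    norm_num
    intro e _ h1 h2
    exact (Finset.notMem_erase v W) (h2 h1)
  exact sum_sq_lipschitz_aux v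
    (fun u => ((E.filter (fun e => u ∈ e ∧ e ⊆ insert v W)).card : ℤ))
    (fun u => ((E.filter (fun e => u ∈ e ∧ e ⊆ W.erase v)).card : ℤ))
    (fun u => ((E.filter (fun e => u ∈ e ∧ v ∈ e ∧ e ⊆ insert v W)).card : ℤ))
    (fun u => Int.natCast_nonneg _) (fun u => Int.natCast_nonneg _) hsplit hBv
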